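/- Let p be an odd prime with p ≠ 5. Then α(p) divides p − (5/p), where (5/p) is the Legendre symbol; that is, as integers, α(p) divides p − legendreSym p 5. -/

import Mathlib

/-- The restricted period (rank of apparition) of the Fibonacci sequence modulo `p`:
the least positive `n` such that `p ∣ F n`. -/
noncomputable def fibAlpha (p : ℕ) : ℕ := sInf {n | 0 < n ∧ p ∣ Nat.fib n}

open Polynomial AdjoinRoot

section Aux

variable (p : ℕ) [hp : Fact p.Prime]

private lemma fibf_monic : (X ^ 2 - X - 1 : (ZMod p)[X]).Monic := by
  monicity!

private lemma fibf_degree : (X ^ 2 - X - 1 : (ZMod p)[X]).degree = 2 := by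
  compute_degree!

private lemma root_sq :
    (root (X ^ 2 - X - 1 : (ZMod p)[X])) ^ 2 = root _ + 1 := by
  have h : mk (X ^ 2 - X - 1 : (ZMod p)[X]) (X ^ 2 - X - 1) = 0 := mk_self
  have := h
  rw [map_sub, map_sub, map_pow, mk_X, map_one] at this
  linear_combination this

/-- `α ^ (n+1) = F (n+1) • α + F n` in the adjoined ring. -/
private lemma root_pow (n : ℕ) :
    (root (X ^ 2 - X - 1 : (ZMod p)[X])) ^ (n + 1)
      = (Nat.fib (n + 1) : AdjoinRoot (X ^ 2 - X - 1 : (ZMod p)[X])) * root _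
        + (Nat.fib n : AdjoinRoot (X ^ 2 - X - 1 : (ZMod p)[X])) := by
  induction n with
  | zero => simp
  | succ n ih =>
    have hsq := root_sq p
    have : (root (X ^ 2 - X - 1 : (ZMod p)[X])) ^ (n + 2)
        = (root _) ^ (n + 1) * root _ := by ring
    rw [this, ih, Nat.fib_add_two]
    push_cast
    linear_combination ((Nat.fib (n+1) : AdjoinRoot (X ^ 2 - X - 1 : (ZMod p)[X]))) * hsq

/-- linear independence of `1, α`. -/
private lemma coeffs_eq_zero (a b : ZMod p)
    (h : (AdjoinRoot.of (X ^ 2 - X - 1 : (ZMod p)[X])) a * root _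
        + (AdjoinRoot.of (X ^ 2 - X - 1 : (ZMod p)[X])) b = 0) : a = 0 ∧ b = 0 := by
  have h' : mk (X ^ 2 - X - 1 : (ZMod p)[X]) (C a * X + C b) = 0 := by
    rw [map_add, map_mul, mk_X, mk_C, mk_C]; exact h
  rw [mk_eq_zero] at h'
  have hz : (C a * X + C b : (ZMod p)[X]) = 0 := by
    by_contra hne
    have hd := Polynomial.degree_le_of_dvd h' hne
    rw [fibf_degree] at hd
    have : (C a * X + C b : (ZMod p)[X]).degree ≤ 1 := by
      apply le_trans (Polynomial.degree_add_le _ _)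
      simp only [sup_le_iff]
      constructor
      · apply le_trans (Polynomial.degree_mul_le _ _)
        have := Polynomial.degree_C_le (a := a)
        have hx : (X : (ZMod p)[X]).degree = 1 := Polynomial.degree_X
        calc (C a).degree + (X : (ZMod p)[X]).degree ≤ 0 + 1 := by
              exact add_le_add Polynomial.degree_C_le (le_of_eq hx)
          _ = 1 := by norm_num
      · exact le_trans Polynomial.degree_C_le (by norm_num)
    have := le_trans hd this
    norm_num at this
  constructor
  · have := congrArg (fun q => Polynomial.coeff q 1) hz
    simpa using this
  · have := congrArg (fun q => Polynomial.coeff q 0) hz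
    simpa using this

/-- The key classical fact: `p ∣ F (p - (5/p))`. -/
private lemma key (hp2 : p ≠ 2) (hp5 : p ≠ 5) :
    (legendreSym p 5 = 1 ∧ p ∣ Nat.fib (p - 1)) ∨
    (legendreSym p 5 = -1 ∧ p ∣ Nat.fib (p + 1)) := by
  have hp' := hp.out
  have hp3 : 3 ≤ p := by
    have := hp'.two_le
    rcases Nat.lt_or_ge p 3 with h | h
    · interval_cases p <;> simp_all
    · exact h
  have hodd : p % 2 = 1 := Nat.Prime.eq_two_or_odd hp' |>.resolve_left hp2
  -- the quotient ring
  set A := AdjoinRoot (X ^ 2 - X - 1 : (ZMod p)[X]) with hA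
  haveI : Nontrivial A :=
    AdjoinRoot.nontrivial _ (by rw [fibf_degree]; norm_num)
  haveI : CharP A p := charP_of_injective_algebraMap' (ZMod p) (A := A) p
  set α : A := root (X ^ 2 - X - 1 : (ZMod p)[X]) with halpha
  set φ : ZMod p →+* A := algebraMap (ZMod p) A with hphi
  have hsq : α ^ 2 = α + 1 := root_sq p
  -- p ≠ 5 : Legendre symbol nonzero
  have h5 : ((5 : ℤ) : ZMod p) ≠ 0 := by
    intro h
    have h' : ((5 : ℕ) : ZMod p) = 0 := by exact_mod_cast h
    rw [ZMod.natCast_eq_zero_iff] at h'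
    exact hp5 ((Nat.prime_dvd_prime_iff_eq hp' (by norm_num)).mp h')
  -- Euler's criterion
  set ε : ZMod p := ((legendreSym p 5 : ℤ) : ZMod p) with heps
  have heuler : ε = (5 : ZMod p) ^ (p / 2) := by
    rw [heps, legendreSym.eq_pow]; norm_num
  -- (2α - 1)^2 = 5
  have hdisc : (2 * α - 1) ^ 2 = 5 := by linear_combination (4 : A) * hsq
  -- (2α-1)^p = (2α-1) * 5^(p/2)
  have hppow : p = 2 * (p / 2) + 1 := by omega
  have h1 : (2 * α - 1) ^ p = (2 * α - 1) * (5 : A) ^ (p / 2) := by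
    have h1' : (2 * α - 1) ^ (2 * (p / 2) + 1) = (2 * α - 1) * (5 : A) ^ (p / 2) := by
      rw [pow_succ, pow_mul, hdisc, mul_comm]
    rw [← hppow] at h1'
    exact h1'
  -- frobenius is additive
  have h2 : (2 * α - 1) ^ p = 2 * α ^ p - 1 := by
    have hfr := map_sub (frobenius A p) (2 * α) 1
    simp only [frobenius_def] at hfr
    rw [hfr, mul_pow, one_pow]
    have h2p : (2 : A) ^ p = 2 := by
      have h2c : (2 : A) = φ 2 := (map_ofNat φ 2).symm
      rw [h2c, ← map_pow, ZMod.pow_card]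
    rw [h2p]
  -- 5 ^ (p/2) = φ ε
  have h3 : (5 : A) ^ (p / 2) = φ ε := by
    rw [heuler, map_pow, map_ofNat]
  have hmain : 2 * α ^ p - 1 = (2 * α - 1) * φ ε := by
    rw [← h2, h1, h3]
  have h2unit : IsUnit (2 : A) := by
    have : (2 : ZMod p) ≠ 0 := by
      have : ((2 : ℕ) : ZMod p) ≠ 0 := by
        rw [Ne, ZMod.natCast_eq_zero_iff]
        intro h
        exact hp2 ((Nat.prime_dvd_prime_iff_eq hp' (by norm_num)).mp h)
      exact_mod_cast this
    have hu : IsUnit (2 : ZMod p) := isUnit_iff_ne_zero.mpr this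
    have hmap := hu.map φ
    rwa [map_ofNat] at hmap
  -- the power formula
  have hpow1 : α ^ p = (Nat.fib p : A) * α + (Nat.fib (p - 1) : A) := by
    have := root_pow p (p - 1)
    rw [show p - 1 + 1 = p by omega] at this
    exact this
  rcases legendreSym.eq_one_or_neg_one (p := p) (a := 5) h5 with he | he
  · -- split case : F_{p-1} ≡ 0
    left
    refine ⟨he, ?_⟩
    have hε1 : φ ε = 1 := by rw [heps, he]; simp
    rw [hε1, mul_one] at hmain
    have hαp : α ^ p = α := h2unit.mul_left_cancel (by linear_combination hmain)
    rw [hpow1] at hαp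
    have hlin : φ ((Nat.fib p : ZMod p) - 1) * α + φ ((Nat.fib (p - 1) : ZMod p)) = 0 := by
      rw [map_sub, map_natCast, map_natCast, map_one]
      linear_combination hαp
    have := (coeffs_eq_zero p _ _ hlin).2
    rwa [ZMod.natCast_eq_zero_iff] at this
  · -- inert case : F_{p+1} ≡ 0
    right
    refine ⟨he, ?_⟩
    have hε1 : φ ε = -1 := by rw [heps, he]; simp
    rw [hε1] at hmain
    have hαp : α ^ p = 1 - α := h2unit.mul_left_cancel (by linear_combination hmain)
    have hαp1 : α ^ (p + 1) = -1 := by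
      rw [pow_succ, hαp]
      linear_combination -hsq
    rw [root_pow p p] at hαp1
    have hlin : φ ((Nat.fib (p + 1) : ZMod p)) * α + φ ((Nat.fib p : ZMod p) + 1) = 0 := by
      rw [map_add, map_natCast, map_natCast, map_one]
      linear_combination hαp1
    have := (coeffs_eq_zero p _ _ hlin).1
    rwa [ZMod.natCast_eq_zero_iff] at this
end Aux

theorem alpha_dvd_sub_legendre (p : ℕ) [Fact p.Prime] (hp2 : p ≠ 2) (hp5 : p ≠ 5) :
    (fibAlpha p : ℤ) ∣ (p : ℤ) - legendreSym p 5 := by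
  have hp' := (inferInstance : Fact p.Prime).out
  have hp3 : 3 ≤ p := by
    have := hp'.two_le
    rcases Nat.lt_or_ge p 3 with h | h
    · interval_cases p <;> simp_all
    · exact h
  have alpha_dvd : ∀ n : ℕ, 0 < n → p ∣ Nat.fib n → fibAlpha p ∣ n := by
    intro n hn hdvd
    have hne : {m | 0 < m ∧ p ∣ Nat.fib m}.Nonempty := ⟨n, hn, hdvd⟩
    have hmem : fibAlpha p ∈ {m | 0 < m ∧ p ∣ Nat.fib m} := Nat.sInf_mem hne
    obtain ⟨hapos, hadvd⟩ := hmem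
    have hg : p ∣ Nat.fib (Nat.gcd (fibAlpha p) n) := by
      rw [Nat.fib_gcd]; exact Nat.dvd_gcd hadvd hdvd
    have hgpos : 0 < Nat.gcd (fibAlpha p) n := Nat.gcd_pos_of_pos_left n hapos
    have hle : fibAlpha p ≤ Nat.gcd (fibAlpha p) n := Nat.sInf_le ⟨hgpos, hg⟩
    have hgeq : Nat.gcd (fibAlpha p) n = fibAlpha p :=
      le_antisymm (Nat.le_of_dvd hapos (Nat.gcd_dvd_left _ _)) hle
    rw [← hgeq]; exact Nat.gcd_dvd_right _ _
  rcases key p hp2 hp5 with ⟨he, hdvd⟩ | ⟨he, hdvd⟩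
  · have h := alpha_dvd (p - 1) (by omega) hdvd
    rw [he]
    have : (p : ℤ) - 1 = ((p - 1 : ℕ) : ℤ) := by
      push_cast [Nat.cast_sub (by omega : 1 ≤ p)]; ring
    rw [this]
    exact_mod_cast h
  · have h := alpha_dvd (p + 1) (by omega) hdvd
    rw [he]
    have : (p : ℤ) - (-1) = ((p + 1 : ℕ) : ℤ) := by push_cast; ring
    rw [this]
    exact_mod_cast h
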